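/- Second-order safe set invariance: let h : ℝ^n → ℝ be twice continuously differentiable along a trajectory x(t), define ψ₀ = h and ψ₁ = ψ̇₀ + k₁ψ₀ with k₁ > 0. If ψ₀(x(0)) ≥ 0, ψ₁(x(0)) ≥ 0, and ψ̇₁(t) + k₂ψ₁(t) ≥ 0 for all t ≥ 0 with k₂ > 0, then ψ₀(x(t)) ≥ 0 and ψ₁(x(t)) ≥ 0 for all t ≥ 0. -/

import Mathlib

lemma gronwall_nonneg (k : ℝ) (y y' : ℝ → ℝ)
    (hd : ∀ t, HasDerivAt y (y' t) t) (h0 : y 0 ≥ 0)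
    (hineq : ∀ t ≥ (0 : ℝ), y' t + k * y t ≥ 0) :
    ∀ t ≥ (0 : ℝ), y t ≥ 0 := by
  intro t ht
  set g : ℝ → ℝ := fun s => Real.exp (k * s) * y s with hg
  have hgd : ∀ s, HasDerivAt g (Real.exp (k * s) * (y' s + k * y s)) s := by
    intro s
    have he : HasDerivAt (fun s : ℝ => Real.exp (k * s)) (Real.exp (k * s) * k) s := by
      have := (Real.hasDerivAt_exp (k * s)).comp s
        ((hasDerivAt_id s).const_mul k)
      simpa [mul_comm, Function.comp_def] using this
    have := he.mul (hd s)
    exact this.congr_deriv (by ring)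
  have hmono : MonotoneOn g (Set.Ici (0 : ℝ)) := by
    apply monotoneOn_of_deriv_nonneg (convex_Ici 0)
      (Continuous.continuousOn
        (continuous_iff_continuousAt.mpr fun s => (hgd s).continuousAt))
    · intro s hs
      exact ((hgd s).differentiableAt).differentiableWithinAt
    · intro s hs
      rw [(hgd s).deriv]
      have hs' : (0:ℝ) ≤ s := le_of_lt (by simpa using hs)
      exact mul_nonneg (Real.exp_nonneg _) (hineq s hs')
  have : g 0 ≤ g t := hmono (Set.self_mem_Ici) ht ht
  have hg0 : g 0 = y 0 := by simp [hg]
  have hgt : 0 ≤ g t := le_trans (by rw [hg0]; exact h0) this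
  have hexp : 0 < Real.exp (k * t) := Real.exp_pos _
  simp only [hg] at hgt
  nlinarith [hgt, hexp]


/-- Second-order (high-order CBF) safe-set invariance with linear class-K
functions: with `ψ₀(t) = h(x(t))` twice differentiable, `ψ₁ = ψ̇₀ + k₁ψ₀`, if
`ψ₀(0) ≥ 0`, `ψ₁(0) ≥ 0`, and `ψ̇₁ + k₂ψ₁ ≥ 0` for all `t ≥ 0`, then
`ψ₀(t) ≥ 0` and `ψ₁(t) ≥ 0` for all `t ≥ 0`. -/
theorem second_order_hocbf_invariance
    {n : ℕ} (h : EuclideanSpace ℝ (Fin n) → ℝ) (x : ℝ → EuclideanSpace ℝ (Fin n))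
    (k₁ k₂ : ℝ) (hk₁ : 0 < k₁) (hk₂ : 0 < k₂)
    (ψ₀' ψ₀'' : ℝ → ℝ)
    (hd1 : ∀ t, HasDerivAt (fun s => h (x s)) (ψ₀' t) t)
    (hd2 : ∀ t, HasDerivAt ψ₀' (ψ₀'' t) t)
    (h0 : h (x 0) ≥ 0)
    (h1 : ψ₀' 0 + k₁ * h (x 0) ≥ 0)
    (hineq : ∀ t ≥ (0 : ℝ),
      (ψ₀'' t + k₁ * ψ₀' t) + k₂ * (ψ₀' t + k₁ * h (x t)) ≥ 0) :
    ∀ t ≥ (0 : ℝ), h (x t) ≥ 0 ∧ ψ₀' t + k₁ * h (x t) ≥ 0 := by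
  have hψ1d : ∀ t, HasDerivAt (fun s => ψ₀' s + k₁ * h (x s))
      (ψ₀'' t + k₁ * ψ₀' t) t := by
    intro t
    exact (hd2 t).add ((hd1 t).const_mul k₁)
  have hψ1 : ∀ t ≥ (0:ℝ), ψ₀' t + k₁ * h (x t) ≥ 0 :=
    gronwall_nonneg k₂ _ _ hψ1d h1 hineq
  have hψ0 : ∀ t ≥ (0:ℝ), h (x t) ≥ 0 :=
    gronwall_nonneg k₁ (fun s => h (x s)) ψ₀' hd1 h0 hψ1
  exact fun t ht => ⟨hψ0 t ht, hψ1 t ht⟩
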